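/- The number p_n of (2,4)-protected standard Young tableaux of size n (shape a hook with an extra box at position (2,2), where the entries 1, 2, 3 do not all lie in the first row or all in the first column) equals (n-3)·2^{n-3} for all n ≥ 4. -/

import Mathlib

/-- A standard Young tableau on a given finite set of cells: the entries on the
cells are a bijection onto `{1, ..., #cells}`, rows and columns are strictly
increasing, and the function vanishes off the cells. Cells are `(row, column)`
pairs, `0`-indexed. -/
def IsSYTOn (cells : Finset (ℕ × ℕ)) (T : ℕ × ℕ → ℕ) : Prop :=
  Set.BijOn T ↑cells ↑(Finset.Icc 1 cells.card) ∧
  (∀ p ∈ cells, ∀ q ∈ cells, p.1 = q.1 → p.2 < q.2 → T p < T q) ∧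
  (∀ p ∈ cells, ∀ q ∈ cells, p.2 = q.2 → p.1 < q.1 → T p < T q) ∧
  (∀ p, p ∉ cells → T p = 0)

/-- The cells of a hook with an additional box at position (2,2) (1-indexed):
first row of length `a`, second row of length 2, and `b` further rows of
length 1. -/
def hookPlusCells (a b : ℕ) : Finset (ℕ × ℕ) :=
  ((Finset.range a).image fun j => (0, j)) ∪ {(1, 0), (1, 1)} ∪
    ((Finset.range b).image fun i => (i + 2, 0))


open Finset


lemma mem_hookPlusCells {a b : ℕ} {p : ℕ × ℕ} :
    p ∈ hookPlusCells a b ↔ (p.1 = 0 ∧ p.2 < a) ∨ p = (1,0) ∨ p = (1,1) ∨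
      (p.2 = 0 ∧ 2 ≤ p.1 ∧ p.1 < b + 2) := by
  rcases p with ⟨i, j⟩
  simp only [hookPlusCells, mem_union, mem_image, mem_range, mem_insert, mem_singleton,
    Prod.mk.injEq, Prod.ext_iff]
  constructor
  · rintro ((⟨k, hk, h0, hj⟩ | (h | h)) | ⟨k, hk, hi, hj⟩)
    · exact Or.inl ⟨h0.symm, hj ▸ hk⟩
    · exact Or.inr (Or.inl ⟨h.1, h.2⟩)
    · exact Or.inr (Or.inr (Or.inl ⟨h.1, h.2⟩))
    · exact Or.inr (Or.inr (Or.inr ⟨hj.symm, by omega, by omega⟩))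
  · rintro (⟨h0, hj⟩ | ⟨h1, h2⟩ | ⟨h1, h2⟩ | ⟨hj, h2, h3⟩)
    · exact Or.inl (Or.inl ⟨j, hj, h0.symm, rfl⟩)
    · exact Or.inl (Or.inr (Or.inl ⟨h1, h2⟩))
    · exact Or.inl (Or.inr (Or.inr ⟨h1, h2⟩))
    · exact Or.inr ⟨i - 2, by omega, by omega, hj.symm⟩

lemma card_hookPlusCells (a b : ℕ) : (hookPlusCells a b).card = a + 2 + b := by
  rw [hookPlusCells]
  rw [card_union_of_disjoint, card_union_of_disjoint]
  · rw [Finset.card_image_of_injective _ (fun x y h => by simpa using h),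
      Finset.card_image_of_injective _ (fun x y h => by simpa using (Prod.ext_iff.1 h).1)]
    simp [card_range]
  · simp only [disjoint_left, mem_image, mem_range, mem_insert, mem_singleton]
    rintro p ⟨k, hk, rfl⟩
    simp
  · simp only [disjoint_left, mem_union, mem_image, mem_range, mem_insert, mem_singleton]
    rintro p h ⟨l, hl, rfl⟩
    rcases h with ⟨k, hk, h⟩ | (h | h) <;> simp_all [Prod.ext_iff]

lemma sort_getD_mem {S : Finset ℕ} {j : ℕ} (hj : j < S.card) :
    (S.sort (·≤·)).getD j 0 ∈ S := by
  rw [List.getD_eq_getElem _ _ (by rwa [Finset.length_sort])]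
  exact (Finset.mem_sort _).1 (List.getElem_mem _)

lemma sort_getD_lt {S : Finset ℕ} {j k : ℕ} (h : j < k) (hk : k < S.card) :
    (S.sort (·≤·)).getD j 0 < (S.sort (·≤·)).getD k 0 := by
  have hk' : k < (S.sort (·≤·)).length := by rwa [Finset.length_sort]
  have hj' : j < (S.sort (·≤·)).length := lt_trans h hk'
  rw [List.getD_eq_getElem _ _ hj', List.getD_eq_getElem _ _ hk']
  exact (S.sortedLT_sort).strictMono_get (by exact h : (⟨j, hj'⟩ : Fin _) < ⟨k, hk'⟩)

lemma mem_sort_getD {S : Finset ℕ} {x : ℕ} (hx : x ∈ S) :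
    ∃ j, j < S.card ∧ (S.sort (·≤·)).getD j 0 = x := by
  have : x ∈ S.sort (·≤·) := (Finset.mem_sort _).2 hx
  obtain ⟨j, hj, hx⟩ := List.mem_iff_getElem.1 this
  exact ⟨j, by rwa [Finset.length_sort] at hj, by rw [List.getD_eq_getElem _ _ hj, hx]⟩

lemma sort_getD_zero {S : Finset ℕ} {j : ℕ} (hj : S.card ≤ j) :
    (S.sort (·≤·)).getD j 0 = 0 :=
  List.getD_eq_default _ _ (by rwa [Finset.length_sort])

def mkT (n : ℕ) (s : Bool) (c : ℕ) (S : Finset ℕ) : ℕ × ℕ → ℕ := fun p =>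
  match p with
  | (0, 0) => 1
  | (0, 1) => if s then 2 else 3
  | (1, 0) => if s then 3 else 2
  | (1, 1) => c
  | (0, j+2) => (S.sort (·≤·)).getD j 0
  | (i+2, 0) => ((((Finset.Icc 4 n).erase c) \ S).sort (·≤·)).getD i 0
  | _ => 0

lemma mem_hookPlusCells' {a b i j : ℕ} :
    (i, j) ∈ hookPlusCells a b ↔ (i = 0 ∧ j < a) ∨ (i = 1 ∧ j = 0) ∨ (i = 1 ∧ j = 1) ∨
      (j = 0 ∧ 2 ≤ i ∧ i < b + 2) := by
  rw [mem_hookPlusCells]; simp [Prod.ext_iff]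

lemma mkT_spec {n : ℕ} {s : Bool} {c : ℕ} {S : Finset ℕ}
    (hc : c ∈ Finset.Icc 4 n) (hS : S ⊆ (Finset.Icc 4 n).erase c) :
    2 ≤ 2 + S.card ∧
    (2 + S.card) + 2 + ((Finset.Icc 4 n).erase c \ S).card = n ∧
    IsSYTOn (hookPlusCells (2 + S.card) (((Finset.Icc 4 n).erase c \ S).card)) (mkT n s c S) ∧
    ∀ p ∈ hookPlusCells (2 + S.card) (((Finset.Icc 4 n).erase c \ S).card),
      mkT n s c S p ≤ 3 → p.1 ≤ 1 ∧ p.2 ≤ 1 := by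
  obtain ⟨hc4, hcn⟩ := Finset.mem_Icc.1 hc
  have hn : 4 ≤ n := le_trans hc4 hcn
  set C := (Finset.Icc 4 n).erase c \ S with hC
  set a := 2 + S.card with ha
  set b := C.card with hb
  have hbC : ((Finset.Icc 4 n).erase c \ S).card = b := by rw [← hC]
  have hSmem : ∀ x ∈ S, 4 ≤ x ∧ x ≤ n ∧ x ≠ c := by
    intro x hx
    have := hS hx
    rw [Finset.mem_erase, Finset.mem_Icc] at this
    exact ⟨this.2.1, this.2.2, this.1⟩
  have hCmem : ∀ x ∈ C, 4 ≤ x ∧ x ≤ n ∧ x ≠ c ∧ x ∉ S := by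
    intro x hx
    rw [hC, Finset.mem_sdiff, Finset.mem_erase, Finset.mem_Icc] at hx
    exact ⟨hx.1.2.1, hx.1.2.2, hx.1.1, hx.2⟩
  have hpart : ∀ x, 4 ≤ x → x ≤ n → x = c ∨ x ∈ S ∨ x ∈ C := by
    intro x h4 hxn
    by_cases h1 : x = c
    · exact Or.inl h1
    by_cases h2 : x ∈ S
    · exact Or.inr (Or.inl h2)
    · refine Or.inr (Or.inr ?_)
      rw [hC, Finset.mem_sdiff, Finset.mem_erase, Finset.mem_Icc]
      exact ⟨⟨h1, h4, hxn⟩, h2⟩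
  have hcards : S.card + C.card = n - 4 := by
    have h1 : ((Finset.Icc 4 n).erase c).card = n - 4 := by
      rw [Finset.card_erase_of_mem hc, Nat.card_Icc]; omega
    have h2 : C.card = ((Finset.Icc 4 n).erase c).card - S.card := by
      rw [hC, Finset.card_sdiff_of_subset hS]
    have h3 : S.card ≤ ((Finset.Icc 4 n).erase c).card := Finset.card_le_card hS
    omega
  have habn : a + 2 + b = n := by omega
  have hcard : (hookPlusCells a b).card = n := by rw [card_hookPlusCells]; omega
  have v00 : mkT n s c S (0, 0) = 1 := rfl
  have v11 : mkT n s c S (1, 1) = c := rfl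
  have v01 : mkT n s c S (0, 1) = if s then 2 else 3 := rfl
  have v10 : mkT n s c S (1, 0) = if s then 3 else 2 := rfl
  have v01' : 2 ≤ mkT n s c S (0, 1) ∧ mkT n s c S (0, 1) ≤ 3 := by
    rw [v01]; cases s <;> simp
  have v10' : 2 ≤ mkT n s c S (1, 0) ∧ mkT n s c S (1, 0) ≤ 3 := by
    rw [v10]; cases s <;> simp
  have vRow : ∀ j, j < S.card → mkT n s c S (0, j + 2) ∈ S := fun j hj => sort_getD_mem hj
  have vCol : ∀ i, i < C.card → mkT n s c S (i + 2, 0) ∈ C := fun i hi => sort_getD_mem hi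
  -- monotonicity along row 0
  have rowmono : ∀ pj qj, pj < qj → qj < a → mkT n s c S (0, pj) < mkT n s c S (0, qj) := by
    intro pj qj h2 hq2
    rcases pj with _ | _ | pj <;> rcases qj with _ | _ | qj <;> try omega
    · show mkT n s c S (0, 0) < mkT n s c S (0, 1)
      rw [v00]; omega
    · show mkT n s c S (0, 0) < mkT n s c S (0, qj + 2)
      have := (hSmem _ (vRow qj (by omega))).1
      rw [v00]; omega
    · show mkT n s c S (0, 1) < mkT n s c S (0, qj + 2)
      have := (hSmem _ (vRow qj (by omega))).1
      omega
    · exact sort_getD_lt (by omega) (by omega)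
  -- monotonicity along column 0
  have colmono : ∀ pi qi, pi < qi → qi < b + 2 → mkT n s c S (pi, 0) < mkT n s c S (qi, 0) := by
    intro pi qi h2 hq2
    rcases pi with _ | _ | pi <;> rcases qi with _ | _ | qi <;> try omega
    · show mkT n s c S (0, 0) < mkT n s c S (1, 0)
      rw [v00]; omega
    · show mkT n s c S (0, 0) < mkT n s c S (qi + 2, 0)
      have := (hCmem _ (vCol qi (by omega))).1
      rw [v00]; omega
    · show mkT n s c S (1, 0) < mkT n s c S (qi + 2, 0)
      have := (hCmem _ (vCol qi (by omega))).1
      omega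
    · exact sort_getD_lt (by omega) (by omega)
  have maps : ∀ p ∈ hookPlusCells a b, mkT n s c S p ∈ Finset.Icc 1 n := by
    rintro ⟨pi, pj⟩ hp
    rw [mem_hookPlusCells'] at hp
    rw [Finset.mem_Icc]
    rcases hp with ⟨rfl, hp2⟩ | ⟨rfl, rfl⟩ | ⟨rfl, rfl⟩ | ⟨rfl, hp2, hp3⟩
    · rcases pj with _ | _ | pj
      · rw [v00]; omega
      · show 1 ≤ mkT n s c S (0, 1) ∧ mkT n s c S (0, 1) ≤ n
        omega
      · show 1 ≤ mkT n s c S (0, pj + 2) ∧ mkT n s c S (0, pj + 2) ≤ n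
        have := hSmem _ (vRow pj (by omega)); omega
    · omega
    · rw [v11]; omega
    · rcases pi with _ | _ | pi
      · omega
      · omega
      · show 1 ≤ mkT n s c S (pi + 2, 0) ∧ mkT n s c S (pi + 2, 0) ≤ n
        have := hCmem _ (vCol pi (by omega)); omega
  have surj : ∀ v ∈ Finset.Icc 1 n, ∃ p, p ∈ hookPlusCells a b ∧ mkT n s c S p = v := by
    intro v hv
    rw [Finset.mem_Icc] at hv
    by_cases h3 : v ≤ 3
    · have hv3 : v = 1 ∨ v = 2 ∨ v = 3 := by omega
      rcases hv3 with rfl | rfl | rfl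
      · exact ⟨(0, 0), mem_hookPlusCells'.2 (Or.inl ⟨rfl, by omega⟩), v00⟩
      · cases s
        · exact ⟨(1, 0), mem_hookPlusCells'.2 (Or.inr (Or.inl ⟨rfl, rfl⟩)), by rw [v10]; simp⟩
        · exact ⟨(0, 1), mem_hookPlusCells'.2 (Or.inl ⟨rfl, by omega⟩), by rw [v01]; simp⟩
      · cases s
        · exact ⟨(0, 1), mem_hookPlusCells'.2 (Or.inl ⟨rfl, by omega⟩), by rw [v01]; simp⟩
        · exact ⟨(1, 0), mem_hookPlusCells'.2 (Or.inr (Or.inl ⟨rfl, rfl⟩)), by rw [v10]; simp⟩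
    · rcases hpart v (by omega) hv.2 with rfl | hvS | hvC
      · exact ⟨(1, 1), mem_hookPlusCells'.2 (Or.inr (Or.inr (Or.inl ⟨rfl, rfl⟩))), v11⟩
      · obtain ⟨j, hj, hjv⟩ := mem_sort_getD hvS
        exact ⟨(0, j + 2), mem_hookPlusCells'.2 (Or.inl ⟨rfl, by omega⟩), hjv⟩
      · obtain ⟨i, hi, hiv⟩ := mem_sort_getD hvC
        exact ⟨(i + 2, 0), mem_hookPlusCells'.2 (Or.inr (Or.inr (Or.inr ⟨rfl, by omega, by omega⟩))), hiv⟩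
  refine ⟨by omega, habn, ⟨?_, ?_, ?_, ?_⟩, ?_⟩
  -- BijOn
  · rw [hcard]
    refine ⟨fun p hp => maps p hp, ?_, ?_⟩
    · intro p hp q hq h
      exact Finset.inj_on_of_surj_on_of_card_le (fun p _ => mkT n s c S p)
        (fun p hp => maps p hp)
        (fun v hv => by obtain ⟨p, hp, he⟩ := surj v hv; exact ⟨p, hp, he⟩)
        (by rw [hcard, Nat.card_Icc]; omega) hp hq h
    · intro v hv
      obtain ⟨p, hp, he⟩ := surj v hv
      exact ⟨p, hp, he⟩
  -- row condition
  · rintro ⟨pi, pj⟩ hp ⟨qi, qj⟩ hq h1 h2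
    simp only [mem_hookPlusCells'] at hp hq
    simp only at h1 h2
    subst h1
    rcases hq with ⟨rfl, hq2⟩ | ⟨h, rfl⟩ | ⟨rfl, rfl⟩ | ⟨rfl, hq2, hq3⟩
    · exact rowmono pj qj h2 hq2
    · omega
    · rcases hp with ⟨h, -⟩ | ⟨-, rfl⟩ | ⟨-, h⟩ | ⟨-, hp2, -⟩ <;> omega
    · omega
  -- column condition
  · rintro ⟨pi, pj⟩ hp ⟨qi, qj⟩ hq h1 h2
    simp only [mem_hookPlusCells'] at hp hq
    simp only at h1 h2
    subst h1
    rcases hq with ⟨rfl, hq2⟩ | ⟨rfl, rfl⟩ | ⟨rfl, rfl⟩ | ⟨rfl, hq2, hq3⟩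
    · omega
    · rcases hp with ⟨rfl, -⟩ | ⟨h, -⟩ | ⟨-, h⟩ | ⟨-, hp2, -⟩ <;> omega
    · rcases hp with ⟨rfl, -⟩ | ⟨h, -⟩ | ⟨h, -⟩ | ⟨h, -⟩ <;> omega
    · exact colmono pi qi h2 hq3
  -- vanishing off cells
  · rintro ⟨pi, pj⟩ hp
    rw [mem_hookPlusCells'] at hp
    rcases pi with _ | _ | pi <;> rcases pj with _ | _ | pj <;> try omega
    · exact sort_getD_zero (by omega)
    · rfl
    · exact sort_getD_zero (by omega)
    · rfl
    · rfl
  -- protected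
  · rintro ⟨pi, pj⟩ hp hv
    rw [mem_hookPlusCells'] at hp
    rcases hp with ⟨rfl, hp2⟩ | ⟨rfl, rfl⟩ | ⟨rfl, rfl⟩ | ⟨rfl, hp2, hp3⟩
    · rcases pj with _ | _ | pj
      · exact ⟨by omega, by omega⟩
      · exact ⟨by omega, by omega⟩
      · have hv' : mkT n s c S (0, pj + 2) ≤ 3 := hv
        have := (hSmem _ (vRow pj (by omega))).1
        omega
    · exact ⟨le_refl 1, by omega⟩
    · exact ⟨le_refl 1, le_refl 1⟩
    · rcases pi with _ | _ | pi <;> try omega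
      have hv' : mkT n s c S (pi + 2, 0) ≤ 3 := hv
      have := (hCmem _ (vCol pi (by omega))).1
      omega

lemma sort_image_getD {m : ℕ} {f : ℕ → ℕ}
    (hinj : ∀ i < m, ∀ j < m, f i = f j → i = j)
    (hmono : ∀ i j, i < j → j < m → f i < f j) :
    ∀ j, j < m → (((Finset.range m).image f).sort (·≤·)).getD j 0 = f j := by
  have hL : ((List.range m).map f).Pairwise (· < ·) := by
    rw [List.pairwise_iff_getElem]
    intro i j hi hj hij
    simp only [List.getElem_map, List.getElem_range]
    exact hmono i j hij (by simpa using hj)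
  have hnd : ((List.range m).map f).Nodup :=
    List.Nodup.map_on (fun i hi j hj h => hinj i (by simpa using hi) j (by simpa using hj) h)
      List.nodup_range
  have heq : ((Finset.range m).image f).sort (·≤·) = (List.range m).map f := by
    apply List.Perm.eq_of_sortedLE (Finset.sortedLT_sort _).sortedLE hL.sortedLT.sortedLE
    apply List.perm_of_nodup_nodup_toFinset_eq (Finset.sort_nodup _ _) hnd
    rw [Finset.sort_toFinset]
    ext x
    simp
  intro j hj
  rw [heq, List.getD_eq_getElem _ _ (by simpa using hj)]
  simp

lemma eq_of_sort_getD {S S' : Finset ℕ} (h0 : 0 ∉ S) (h0' : 0 ∉ S')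
    (h : ∀ j, (S.sort (·≤·)).getD j 0 = (S'.sort (·≤·)).getD j 0) : S = S' := by
  have hcard : S.card = S'.card := by
    by_contra hne
    rcases Nat.lt_or_ge S.card S'.card with hlt | hge
    · have := h S.card
      rw [sort_getD_zero le_rfl] at this
      exact h0' (this ▸ sort_getD_mem hlt)
    · have hlt : S'.card < S.card := by omega
      have := h S'.card
      rw [sort_getD_zero le_rfl] at this
      exact h0 (this ▸ sort_getD_mem hlt)
  have hlist : S.sort (·≤·) = S'.sort (·≤·) := by
    apply List.ext_getElem (by rw [Finset.length_sort, Finset.length_sort, hcard])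
    intro j h1 h2
    have := h j
    rwa [List.getD_eq_getElem _ _ h1, List.getD_eq_getElem _ _ h2] at this
  rw [← Finset.sort_toFinset S (·≤·), ← Finset.sort_toFinset S' (·≤·), hlist]


lemma analysis {n : ℕ} {T : ℕ × ℕ → ℕ} {a b : ℕ} (ha : 2 ≤ a) (hab : a + 2 + b = n)
    (hsyt : IsSYTOn (hookPlusCells a b) T)
    (hprot : ∀ p ∈ hookPlusCells a b, T p ≤ 3 → p.1 ≤ 1 ∧ p.2 ≤ 1) :
    ∃ s c S, c ∈ Finset.Icc 4 n ∧ S ⊆ (Finset.Icc 4 n).erase c ∧ T = mkT n s c S := by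
  have hn : 4 ≤ n := by omega
  have hcard : (hookPlusCells a b).card = n := by rw [card_hookPlusCells]; omega
  obtain ⟨hbij, hrow, hcol, hzero⟩ := hsyt
  rw [hcard] at hbij
  have hmaps : ∀ p ∈ hookPlusCells a b, 1 ≤ T p ∧ T p ≤ n := by
    intro p hp
    have := hbij.1 (Finset.mem_coe.2 hp)
    rw [Finset.mem_coe, Finset.mem_Icc] at this
    exact this
  have hinj : ∀ p ∈ hookPlusCells a b, ∀ q ∈ hookPlusCells a b, T p = T q → p = q := by
    intro p hp q hq h
    exact hbij.2.1 (Finset.mem_coe.2 hp) (Finset.mem_coe.2 hq) h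
  have hsurj : ∀ v, 1 ≤ v → v ≤ n → ∃ p ∈ hookPlusCells a b, T p = v := by
    intro v h1 h2
    obtain ⟨p, hp, he⟩ := hbij.2.2 (Finset.mem_coe.2 (Finset.mem_Icc.2 ⟨h1, h2⟩))
    exact ⟨p, Finset.mem_coe.1 hp, he⟩
  -- square cells are cells
  have m00 : ((0,0) : ℕ × ℕ) ∈ hookPlusCells a b := mem_hookPlusCells'.2 (Or.inl ⟨rfl, by omega⟩)
  have m01 : ((0,1) : ℕ × ℕ) ∈ hookPlusCells a b := mem_hookPlusCells'.2 (Or.inl ⟨rfl, by omega⟩)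
  have m10 : ((1,0) : ℕ × ℕ) ∈ hookPlusCells a b := mem_hookPlusCells'.2 (Or.inr (Or.inl ⟨rfl, rfl⟩))
  have m11 : ((1,1) : ℕ × ℕ) ∈ hookPlusCells a b := mem_hookPlusCells'.2 (Or.inr (Or.inr (Or.inl ⟨rfl, rfl⟩)))
  have mrow : ∀ j, j < a - 2 → ((0, j+2) : ℕ × ℕ) ∈ hookPlusCells a b :=
    fun j hj => mem_hookPlusCells'.2 (Or.inl ⟨rfl, by omega⟩)
  have mcol : ∀ i, i < b → ((i+2, 0) : ℕ × ℕ) ∈ hookPlusCells a b :=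
    fun i hi => mem_hookPlusCells'.2 (Or.inr (Or.inr (Or.inr ⟨rfl, by omega, by omega⟩)))
  -- basic ordering facts
  have h00_01 : T (0,0) < T (0,1) := hrow _ m00 _ m01 rfl (by omega)
  have h00_10 : T (0,0) < T (1,0) := hcol _ m00 _ m10 rfl (by omega)
  have h01_11 : T (0,1) < T (1,1) := hcol _ m01 _ m11 rfl (by omega)
  have h10_11 : T (1,0) < T (1,1) := hrow _ m10 _ m11 rfl (by omega)
  -- T (0,0) = 1
  have hmin : ∀ p ∈ hookPlusCells a b, p ≠ (0,0) → T (0,0) < T p := by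
    rintro ⟨pi, pj⟩ hp hne
    rcases mem_hookPlusCells'.1 hp with ⟨rfl, hp2⟩ | ⟨rfl, rfl⟩ | ⟨rfl, rfl⟩ | ⟨rfl, hp2, hp3⟩
    · have : pj ≠ 0 := fun h => hne (by rw [h])
      exact hrow _ m00 _ hp rfl (by omega)
    · exact h00_10
    · omega
    · exact hcol _ m00 _ hp rfl (by omega)
  have h1 : T (0,0) = 1 := by
    obtain ⟨p, hp, he⟩ := hsurj 1 le_rfl (by omega)
    rcases eq_or_ne p (0,0) with rfl | hne
    · exact he
    · have := hmin p hp hne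
      have := (hmaps _ m00).1
      omega
  -- values 2 and 3 are in the square at (0,1) / (1,0)
  have hsquare : ∀ p ∈ hookPlusCells a b, T p ≤ 3 →
      p = (0,0) ∨ p = (0,1) ∨ p = (1,0) ∨ p = (1,1) := by
    rintro ⟨pi, pj⟩ hp hv
    obtain ⟨hle1, hle2⟩ := hprot _ hp hv
    simp only at hle1 hle2
    rcases mem_hookPlusCells'.1 hp with ⟨rfl, hp2⟩ | ⟨rfl, rfl⟩ | ⟨rfl, rfl⟩ | ⟨rfl, hp2, hp3⟩
    · have : pj = 0 ∨ pj = 1 := by omega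
      rcases this with rfl | rfl
      · exact Or.inl rfl
      · exact Or.inr (Or.inl rfl)
    · exact Or.inr (Or.inr (Or.inl rfl))
    · exact Or.inr (Or.inr (Or.inr rfl))
    · omega
  have hT11 : 3 < T (1,1) := by
    rcases Nat.lt_or_ge 3 (T (1,1)) with h | h
    · exact h
    -- T (1,1) ≤ 3 : then T (0,1), T(1,0) ∈ {2}, contradiction
    · exfalso
      have e01 : T (0,1) = 2 := by omega
      have e10 : T (1,0) = 2 := by omega
      have := hinj _ m01 _ m10 (e01.trans e10.symm)
      simp at this
  have hsq : (T (0,1) = 2 ∧ T (1,0) = 3) ∨ (T (0,1) = 3 ∧ T (1,0) = 2) := by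
    obtain ⟨p2, hp2, he2⟩ := hsurj 2 (by omega) (by omega)
    obtain ⟨p3, hp3, he3⟩ := hsurj 3 (by omega) (by omega)
    have hs2 := hsquare _ hp2 (by omega)
    have hs3 := hsquare _ hp3 (by omega)
    have hne01 : T (0,0) ≠ 2 := by omega
    have hne03 : T (0,0) ≠ 3 := by omega
    rcases hs2 with rfl | rfl | rfl | rfl <;> rcases hs3 with rfl | rfl | rfl | rfl <;> omega
  -- extracted data
  set c := T (1,1) with hc_def
  have hc : c ∈ Finset.Icc 4 n := Finset.mem_Icc.2 ⟨by omega, (hmaps _ m11).2⟩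
  set S := (Finset.range (a-2)).image (fun j => T (0, j+2)) with hS_def
  -- row values are ≥ 4, ≤ n, ≠ c
  have hrowval : ∀ j, j < a - 2 → 4 ≤ T (0, j+2) ∧ T (0, j+2) ≤ n ∧ T (0, j+2) ≠ c := by
    intro j hj
    have hmem := mrow j hj
    have hgt : T (0,1) < T (0, j+2) := hrow _ m01 _ hmem rfl (by omega)
    have hne10 : T (0, j+2) ≠ T (1,0) := fun h => by
      have := hinj _ hmem _ m10 h; simp at this
    have hnec : T (0, j+2) ≠ c := fun h => by
      have := hinj _ hmem _ m11 h; simp at this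
    have := (hmaps _ hmem).2
    rcases hsq with ⟨e1, e2⟩ | ⟨e1, e2⟩ <;> exact ⟨by omega, this, hnec⟩
  have hS : S ⊆ (Finset.Icc 4 n).erase c := by
    intro x hx
    rw [hS_def, Finset.mem_image] at hx
    obtain ⟨j, hj, rfl⟩ := hx
    rw [Finset.mem_range] at hj
    obtain ⟨e1, e2, e3⟩ := hrowval j hj
    rw [Finset.mem_erase, Finset.mem_Icc]
    exact ⟨e3, e1, e2⟩
  have hrowinj : ∀ i < a-2, ∀ j < a-2, T (0, i+2) = T (0, j+2) → i = j := by
    intro i hi j hj h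
    have := hinj _ (mrow i hi) _ (mrow j hj) h
    simpa using this
  have hrowmono : ∀ i j, i < j → j < a-2 → T (0, i+2) < T (0, j+2) :=
    fun i j hij hj => hrow _ (mrow i (by omega)) _ (mrow j hj) rfl (by omega)
  have hScard : S.card = a - 2 := by
    rw [hS_def, Finset.card_image_of_injOn, Finset.card_range]
    intro i hi j hj h
    exact hrowinj i (by simpa using hi) j (by simpa using hj) h
  have hSgetD : ∀ j, j < a - 2 → (S.sort (·≤·)).getD j 0 = T (0, j+2) :=
    sort_image_getD hrowinj hrowmono
  -- column values
  set Q := (Finset.range b).image (fun i => T (i+2, 0)) with hQ_def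
  have hcolval : ∀ i, i < b → 4 ≤ T (i+2, 0) ∧ T (i+2, 0) ≤ n ∧ T (i+2, 0) ≠ c ∧ T (i+2,0) ∉ S := by
    intro i hi
    have hmem := mcol i hi
    have hgt : T (1,0) < T (i+2, 0) := hcol _ m10 _ hmem rfl (by omega)
    have hne01 : T (i+2, 0) ≠ T (0,1) := fun h => by
      have := hinj _ hmem _ m01 h; simp at this
    have hnec : T (i+2, 0) ≠ c := fun h => by
      have := hinj _ hmem _ m11 h; simp at this
    have hnS : T (i+2, 0) ∉ S := by
      rw [hS_def, Finset.mem_image]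
      rintro ⟨j, hj, hje⟩
      rw [Finset.mem_range] at hj
      have := hinj _ (mrow j hj) _ hmem hje
      simp at this
    have := (hmaps _ hmem).2
    rcases hsq with ⟨e1, e2⟩ | ⟨e1, e2⟩ <;> exact ⟨by omega, this, hnec, hnS⟩
  have hcolinj : ∀ i < b, ∀ j < b, T (i+2, 0) = T (j+2, 0) → i = j := by
    intro i hi j hj h
    have := hinj _ (mcol i hi) _ (mcol j hj) h
    simpa using this
  have hcolmono : ∀ i j, i < j → j < b → T (i+2, 0) < T (j+2, 0) :=
    fun i j hij hj => hcol _ (mcol i (by omega)) _ (mcol j hj) rfl (by omega)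
  have hQcard : Q.card = b := by
    rw [hQ_def, Finset.card_image_of_injOn, Finset.card_range]
    intro i hi j hj h
    exact hcolinj i (by simpa using hi) j (by simpa using hj) h
  have hQgetD : ∀ j, j < b → (Q.sort (·≤·)).getD j 0 = T (j+2, 0) :=
    sort_image_getD hcolinj hcolmono
  have hQsub : Q ⊆ (Finset.Icc 4 n).erase c \ S := by
    intro x hx
    rw [hQ_def, Finset.mem_image] at hx
    obtain ⟨i, hi, rfl⟩ := hx
    rw [Finset.mem_range] at hi
    obtain ⟨e1, e2, e3, e4⟩ := hcolval i hi
    rw [Finset.mem_sdiff, Finset.mem_erase, Finset.mem_Icc]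
    exact ⟨⟨e3, e1, e2⟩, e4⟩
  have hCeq : (Finset.Icc 4 n).erase c \ S = Q := by
    apply (Finset.eq_of_subset_of_card_le hQsub _).symm
    have h1 : ((Finset.Icc 4 n).erase c).card = n - 4 := by
      rw [Finset.card_erase_of_mem hc, Nat.card_Icc]; omega
    have h2 : ((Finset.Icc 4 n).erase c \ S).card = ((Finset.Icc 4 n).erase c).card - S.card :=
      Finset.card_sdiff_of_subset hS
    omega
  -- choose s
  have key : ∀ s : Bool, (T (0,1) = if s then 2 else 3) → (T (1,0) = if s then 3 else 2) →
      T = mkT n s c S := by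
    intro s e01 e10
    funext p
    obtain ⟨pi, pj⟩ := p
    rcases pi with _ | _ | pi <;> rcases pj with _ | _ | pj
    · exact h1
    · exact e01
    · -- (0, pj+2)
      show T (0, pj+2) = (S.sort (·≤·)).getD pj 0
      rcases Nat.lt_or_ge pj (a-2) with hlt | hge
      · exact (hSgetD pj hlt).symm
      · rw [sort_getD_zero (by omega)]
        exact hzero _ (by rw [mem_hookPlusCells']; omega)
    · exact e10
    · rfl
    · -- (1, pj+2)
      show T (1, pj+2) = 0
      exact hzero _ (by rw [mem_hookPlusCells']; omega)
    · -- (pi+2, 0)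
      show T (pi+2, 0) = (((Finset.Icc 4 n).erase c \ S).sort (·≤·)).getD pi 0
      rw [hCeq]
      rcases Nat.lt_or_ge pi b with hlt | hge
      · exact (hQgetD pi hlt).symm
      · rw [sort_getD_zero (by omega)]
        exact hzero _ (by rw [mem_hookPlusCells']; omega)
    · -- (pi+2, 1)
      show T (pi+2, 1) = 0
      exact hzero _ (by rw [mem_hookPlusCells']; omega)
    · -- (pi+2, pj+2)
      show T (pi+2, pj+2) = 0
      exact hzero _ (by rw [mem_hookPlusCells']; omega)
  rcases hsq with ⟨e01, e10⟩ | ⟨e01, e10⟩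
  · exact ⟨true, c, S, hc, hS, key true e01 e10⟩
  · exact ⟨false, c, S, hc, hS, key false e01 e10⟩

lemma mkT_inj {n : ℕ} {s s' : Bool} {c c' : ℕ} {S S' : Finset ℕ}
    (hc : c ∈ Finset.Icc 4 n) (hS : S ⊆ (Finset.Icc 4 n).erase c)
    (hc' : c' ∈ Finset.Icc 4 n) (hS' : S' ⊆ (Finset.Icc 4 n).erase c')
    (h : mkT n s c S = mkT n s' c' S') : s = s' ∧ c = c' ∧ S = S' := by
  have h01 : (if s then 2 else 3 : ℕ) = if s' then 2 else 3 := congrFun h (0, 1)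
  have hss : s = s' := by cases s <;> cases s' <;> simp_all
  have hcc : c = c' := congrFun h (1, 1)
  have h0S : (0 : ℕ) ∉ S := fun h0 => by have := hS h0; simp [Finset.mem_Icc] at this
  have h0S' : (0 : ℕ) ∉ S' := fun h0 => by have := hS' h0; simp [Finset.mem_Icc] at this
  refine ⟨hss, hcc, eq_of_sort_getD h0S h0S' fun j => ?_⟩
  exact congrFun h (0, j + 2)

theorem protected_count (n : ℕ) (hn : 4 ≤ n) :
    Nat.card {T : ℕ × ℕ → ℕ // ∃ a b : ℕ, 2 ≤ a ∧ a + 2 + b = n ∧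
        IsSYTOn (hookPlusCells a b) T ∧
        ∀ p ∈ hookPlusCells a b, T p ≤ 3 → p.1 ≤ 1 ∧ p.2 ≤ 1} =
      (n - 3) * 2 ^ (n - 3) := by
  classical
  set F : Finset (Bool × ℕ × Finset ℕ) :=
    Finset.univ ×ˢ (Finset.Icc 4 n).biUnion
      (fun c => ((Finset.Icc 4 n).erase c).powerset.image (fun S => (c, S))) with hF
  have hmemF : ∀ d : Bool × ℕ × Finset ℕ,
      d ∈ F ↔ d.2.1 ∈ Finset.Icc 4 n ∧ d.2.2 ⊆ (Finset.Icc 4 n).erase d.2.1 := by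
    rintro ⟨s, c, S⟩
    simp only [hF, Finset.mem_product, Finset.mem_univ, true_and, Finset.mem_biUnion,
      Finset.mem_image, Finset.mem_powerset, Prod.mk.injEq]
    constructor
    · rintro ⟨c', hc', S', hS', rfl, rfl⟩
      exact ⟨hc', hS'⟩
    · rintro ⟨hc, hS⟩
      exact ⟨c, hc, S, hS, rfl, rfl⟩
  set G : Bool × ℕ × Finset ℕ → (ℕ × ℕ → ℕ) := fun d => mkT n d.1 d.2.1 d.2.2 with hG
  have hset : {T : ℕ × ℕ → ℕ | ∃ a b : ℕ, 2 ≤ a ∧ a + 2 + b = n ∧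
      IsSYTOn (hookPlusCells a b) T ∧
      ∀ p ∈ hookPlusCells a b, T p ≤ 3 → p.1 ≤ 1 ∧ p.2 ≤ 1} = ↑(F.image G) := by
    ext T
    simp only [Set.mem_setOf_eq, Finset.coe_image, Set.mem_image, Finset.mem_coe]
    constructor
    · rintro ⟨a, b, ha, hab, hsyt, hprot⟩
      obtain ⟨s, c, S, hc, hS, rfl⟩ := analysis ha hab hsyt hprot
      exact ⟨(s, c, S), (hmemF (s, c, S)).2 ⟨hc, hS⟩, rfl⟩
    · rintro ⟨⟨s, c, S⟩, hd, rfl⟩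
      obtain ⟨hc, hS⟩ := (hmemF (s, c, S)).1 hd
      obtain ⟨h1, h2, h3, h4⟩ := mkT_spec (s := s) hc hS
      exact ⟨2 + S.card, ((Finset.Icc 4 n).erase c \ S).card, h1, h2, h3, h4⟩
  have hinjG : Set.InjOn G ↑F := by
    rintro ⟨s, c, S⟩ hd ⟨s', c', S'⟩ hd' h
    obtain ⟨hc, hS⟩ := (hmemF _).1 (Finset.mem_coe.1 hd)
    obtain ⟨hc', hS'⟩ := (hmemF _).1 (Finset.mem_coe.1 hd')
    obtain ⟨e1, e2, e3⟩ := mkT_inj hc hS hc' hS' h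
    exact Prod.ext e1 (Prod.ext e2 e3)
  have hcardF : F.card = (n - 3) * 2 ^ (n - 3) := by
    rw [hF, Finset.card_product, Finset.card_biUnion]
    · have : ∀ c ∈ Finset.Icc 4 n,
          (((Finset.Icc 4 n).erase c).powerset.image (fun S => (c, S))).card = 2 ^ (n - 4) := by
        intro c hc
        rw [Finset.card_image_of_injective _ (fun x y h => by simpa using h),
          Finset.card_powerset, Finset.card_erase_of_mem hc, Nat.card_Icc]
        have he : n + 1 - 4 - 1 = n - 4 := by omega
        rw [he]
      rw [Finset.sum_congr rfl this, Finset.sum_const, Nat.card_Icc, smul_eq_mul]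
      have h1 : n + 1 - 4 = n - 3 := by omega
      have h2 : n - 3 = (n - 4) + 1 := by omega
      rw [h1, Finset.card_univ, Fintype.card_bool, h2, pow_succ]
      ring
    · intro x hx y hy hxy
      simp only [Finset.disjoint_left, Finset.mem_image, Finset.mem_powerset]
      rintro ⟨c, S⟩ ⟨S1, hS1, he1⟩ ⟨S2, hS2, he2⟩
      rw [Prod.mk.injEq] at he1 he2
      exact hxy (he1.1.trans he2.1.symm)
  calc Nat.card {T : ℕ × ℕ → ℕ // ∃ a b : ℕ, 2 ≤ a ∧ a + 2 + b = n ∧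
        IsSYTOn (hookPlusCells a b) T ∧
        ∀ p ∈ hookPlusCells a b, T p ≤ 3 → p.1 ≤ 1 ∧ p.2 ≤ 1}
      = Nat.card ↥(↑(F.image G) : Set (ℕ × ℕ → ℕ)) := by rw [← hset]; rfl
    _ = (F.image G).card := by rw [Nat.card_coe_set_eq, Set.ncard_coe_finset]
    _ = F.card := Finset.card_image_of_injOn hinjG
    _ = (n - 3) * 2 ^ (n - 3) := hcardF
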